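/- Modal contributions of a conjugate pair decompose into pairwise interaction matrices: suppose A is Hurwitz and there is a permutation σ of {1,…,n} such that for every i: λ_{σ(i)} = conj(λ_i), u_{σ(i)} = conj(u_i) (entrywise), and v_{σ(i)} = conj(v_i) (entrywise). Then for each i, ½ Vᴴ ( P̄_{z i} + P̄_{z σ(i)} ) V = ∑_{j=1}^n P_{(ij)}, where P̄_{z i} := −{ ∑_{j=1}^n ((u_iᴴ u_j)/(conj(λ_i) + λ_j)) e_i e_jᵀ }_H and P_{(ij)} := −½ { R_iᴴ R_j/(conj(λ_i) + λ_j) + R_iᵀ R_j/(λ_i + λ_j) }_H. -/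

import Mathlib

open Matrix BigOperators

/-- The residue matrix `R_i = u_i v_iᵀ`, with entries `(R_i)_{kl} = U_{ki} V_{il}`. -/
noncomputable def residue {n : ℕ} (U V : Matrix (Fin n) (Fin n) ℂ) (i : Fin n) :
    Matrix (Fin n) (Fin n) ℂ :=
  Matrix.vecMulVec (fun k => U k i) (fun l => V i l)

/-- The Hermitian part `{M}_H = ½(M + Mᴴ)` of a square complex matrix. -/
noncomputable def hermPart {n : ℕ} (M : Matrix (Fin n) (Fin n) ℂ) :
    Matrix (Fin n) (Fin n) ℂ :=
  (1 / 2 : ℂ) • (M + Mᴴ)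

/-- The modal-contribution matrix
`P̄_{z i} := −{ ∑_j ((u_iᴴ u_j)/(conj(λ_i) + λ_j)) e_i e_jᵀ }_H`. -/
noncomputable def modalContrib {n : ℕ} (U : Matrix (Fin n) (Fin n) ℂ) (lam : Fin n → ℂ)
    (i : Fin n) : Matrix (Fin n) (Fin n) ℂ :=
  -hermPart (∑ j, Matrix.single i j
    ((∑ k, starRingEnd ℂ (U k i) * U k j) / (starRingEnd ℂ (lam i) + lam j)))

/-- The Lyapunov modal interaction matrix
`P_{(ij)} := −½ { R_iᴴ R_j/(conj(λ_i) + λ_j) + R_iᵀ R_j/(λ_i + λ_j) }_H`. -/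
noncomputable def modalInteraction {n : ℕ} (U V : Matrix (Fin n) (Fin n) ℂ)
    (lam : Fin n → ℂ) (i j : Fin n) : Matrix (Fin n) (Fin n) ℂ :=
  -((1 / 2 : ℂ) • hermPart
      ((starRingEnd ℂ (lam i) + lam j)⁻¹ • ((residue U V i)ᴴ * residue U V j) +
        (lam i + lam j)⁻¹ • ((residue U V i)ᵀ * residue U V j)))

lemma sandwich_aux {n : ℕ} (V : Matrix (Fin n) (Fin n) ℂ) (p j : Fin n) (c : ℂ) (k l : Fin n) :
    (Vᴴ * Matrix.single p j c * V) k l = (starRingEnd ℂ (V p k)) * c * V j l := by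
  rw [Matrix.mul_apply, Finset.sum_eq_single j]
  · rw [Matrix.mul_single_apply_same, Matrix.conjTranspose_apply]; rfl
  · intro b _ hb
    rw [Matrix.mul_single_apply_of_ne (hbj := hb), zero_mul]
  · simp

lemma h1_aux {n : ℕ} (U V : Matrix (Fin n) (Fin n) ℂ) (lam : Fin n → ℂ) (i : Fin n) :
    Vᴴ * (∑ j, Matrix.single i j
      ((∑ k, starRingEnd ℂ (U k i) * U k j) / (starRingEnd ℂ (lam i) + lam j))) * V =
    ∑ j, (starRingEnd ℂ (lam i) + lam j)⁻¹ • ((residue U V i)ᴴ * residue U V j) := by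
  rw [Matrix.mul_sum, Matrix.sum_mul]
  refine Finset.sum_congr rfl fun j _ => ?_
  ext k l
  rw [sandwich_aux]
  simp only [Matrix.smul_apply, Matrix.mul_apply, Matrix.conjTranspose_apply, residue,
    Matrix.vecMulVec_apply, smul_eq_mul]
  rw [
    show (∑ m, star (U m i * V i k) * (U m j * V j l))
        = (∑ m, starRingEnd ℂ (U m i) * U m j) * (starRingEnd ℂ (V i k) * V j l) by
      rw [Finset.sum_mul]
      exact Finset.sum_congr rfl fun m _ => by
        simp only [star_mul', starRingEnd_apply]; ring,
    div_eq_mul_inv]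
  ring

lemma h2_aux {n : ℕ} (U V : Matrix (Fin n) (Fin n) ℂ) (lam : Fin n → ℂ)
    (σ : Equiv.Perm (Fin n))
    (hσlam : ∀ i, lam (σ i) = starRingEnd ℂ (lam i))
    (hσU : ∀ i k, U k (σ i) = starRingEnd ℂ (U k i))
    (hσV : ∀ i k, V (σ i) k = starRingEnd ℂ (V i k))
    (i : Fin n) :
    Vᴴ * (∑ j, Matrix.single (σ i) j
      ((∑ k, starRingEnd ℂ (U k (σ i)) * U k j) / (starRingEnd ℂ (lam (σ i)) + lam j))) * V =
    ∑ j, (lam i + lam j)⁻¹ • ((residue U V i)ᵀ * residue U V j) := by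
  rw [Matrix.mul_sum, Matrix.sum_mul]
  refine Finset.sum_congr rfl fun j _ => ?_
  ext k l
  rw [sandwich_aux]
  simp only [Matrix.smul_apply, Matrix.mul_apply, Matrix.transpose_apply, residue,
    Matrix.vecMulVec_apply, smul_eq_mul, hσU, hσlam, hσV, Complex.conj_conj]
  rw [show (∑ m, U m i * V i k * (U m j * V j l))
        = (∑ m, U m i * U m j) * (V i k * V j l) by
      rw [Finset.sum_mul]
      exact Finset.sum_congr rfl fun m _ => by ring,
    div_eq_mul_inv]
  ring

/-- Modal contributions of a conjugate pair decompose into pairwise interaction matrices: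
if `A` is Hurwitz and `σ` is a permutation with `λ_{σ(i)} = conj(λ_i)`,
`u_{σ(i)} = conj(u_i)` and `v_{σ(i)} = conj(v_i)`, then for each `i`,
`½ Vᴴ (P̄_{z i} + P̄_{z σ(i)}) V = ∑_j P_{(ij)}`. -/
theorem conjugate_pair_modal_contribution_decomposition
    (n : ℕ) (hn : 1 ≤ n)
    (A U V : Matrix (Fin n) (Fin n) ℂ) (lam : Fin n → ℂ)
    (hUV : U * V = 1) (hVU : V * U = 1)
    (hA : A = U * Matrix.diagonal lam * V)
    (hHur : ∀ i, (lam i).re < 0)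
    (σ : Equiv.Perm (Fin n))
    (hσlam : ∀ i, lam (σ i) = starRingEnd ℂ (lam i))
    (hσU : ∀ i k, U k (σ i) = starRingEnd ℂ (U k i))
    (hσV : ∀ i k, V (σ i) k = starRingEnd ℂ (V i k))
    (i : Fin n) :
    (1 / 2 : ℂ) • (Vᴴ * (modalContrib U lam i + modalContrib U lam (σ i)) * V) =
      ∑ j, modalInteraction U V lam i j := by
  set M₁ : Matrix (Fin n) (Fin n) ℂ := ∑ j, Matrix.single i j
      ((∑ k, starRingEnd ℂ (U k i) * U k j) / (starRingEnd ℂ (lam i) + lam j)) with hM₁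
  set M₂ : Matrix (Fin n) (Fin n) ℂ := ∑ j, Matrix.single (σ i) j
      ((∑ k, starRingEnd ℂ (U k (σ i)) * U k j) / (starRingEnd ℂ (lam (σ i)) + lam j)) with hM₂
  have h1 : Vᴴ * M₁ * V
      = ∑ j, (starRingEnd ℂ (lam i) + lam j)⁻¹ • ((residue U V i)ᴴ * residue U V j) :=
    h1_aux U V lam i
  have h2 : Vᴴ * M₂ * V
      = ∑ j, (lam i + lam j)⁻¹ • ((residue U V i)ᵀ * residue U V j) :=
    h2_aux U V lam σ hσlam hσU hσV i
  have h1' : Vᴴ * M₁ᴴ * V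
      = (∑ j, (starRingEnd ℂ (lam i) + lam j)⁻¹ • ((residue U V i)ᴴ * residue U V j))ᴴ := by
    rw [← h1, conjTranspose_mul, conjTranspose_mul, conjTranspose_conjTranspose,
      Matrix.mul_assoc]
  have h2' : Vᴴ * M₂ᴴ * V
      = (∑ j, (lam i + lam j)⁻¹ • ((residue U V i)ᵀ * residue U V j))ᴴ := by
    rw [← h2, conjTranspose_mul, conjTranspose_mul, conjTranspose_conjTranspose,
      Matrix.mul_assoc]
  have hC1 : modalContrib U lam i = -((1 / 2 : ℂ) • (M₁ + M₁ᴴ)) := rfl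
  have hC2 : modalContrib U lam (σ i) = -((1 / 2 : ℂ) • (M₂ + M₂ᴴ)) := rfl
  rw [hC1, hC2]
  simp only [modalInteraction, hermPart]
  simp only [Finset.sum_neg_distrib, ← Finset.smul_sum, Finset.sum_add_distrib,
    ← Matrix.conjTranspose_sum]
  simp only [Matrix.mul_add, Matrix.add_mul, Matrix.mul_neg, Matrix.neg_mul,
    Matrix.mul_smul, Matrix.smul_mul]
  rw [h1, h2, h1', h2']
  simp only [conjTranspose_add]
  module
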